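/- arXiv:2501.06512 — 4 statements merged into one kernel-verified Lean document; each statement's English description precedes it below -/
import Mathlib

section
/- Suppose D_d = 1 (i.e., d is odd and a_1·a_2⋯a_d = 1). Then the series of real numbers ∑_{n=2}^∞ artanh( B_{2d−1} / B_{2nd−1} ) converges, and its sum equals (1/2)·ln( (B_{3d−1} + B_{d−1}) / (B_{3d−1} − B_{d−1}) ), where artanh denotes the inverse hyperbolic tangent. -/
/-- The inverse hyperbolic tangent. -/
noncomputable def artanh (x : ℝ) : ℝ := (1 / 2) * Real.log ((1 + x) / (1 - x))

/-- ℕ-indexed denominators: `Bn a b k = B (k-1)`. -/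
def Bn (a b : ℤ → ℤ) : ℕ → ℤ
  | 0 => 0
  | 1 => 1
  | n+2 => b ((n : ℤ) + 1) * Bn a b (n+1) + a ((n : ℤ) + 1) * Bn a b n

/-- ℕ-indexed numerators: `An a b k = A (k-1)` (second solution of the recurrence). -/
def An (a b : ℤ → ℤ) : ℕ → ℤ
  | 0 => 1
  | 1 => 0
  | n+2 => b ((n : ℤ) + 1) * An a b (n+1) + a ((n : ℤ) + 1) * An a b n

set_option maxHeartbeats 2000000 in
/-- The inverse-hyperbolic-tangent telescoping series: if `D_d = 1` then
`∑_{n≥2} artanh(B_{2d−1}/B_{2nd−1}) = (1/2)·ln((B_{3d−1}+B_{d−1})/(B_{3d−1}−B_{d−1}))`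
(the series is indexed here by `n : ℕ` via the shift `n ↦ n + 2`). -/
theorem artanh_series
    (d : ℕ) (hd : 1 ≤ d) (a b : ℤ → ℤ)
    (ha : ∀ ν : ℤ, 1 ≤ ν → 0 < a ν) (hb : ∀ ν : ℤ, 1 ≤ ν → 0 < b ν)
    (hpa : ∀ ν : ℤ, 1 ≤ ν → a (ν + d) = a ν) (hpb : ∀ ν : ℤ, 1 ≤ ν → b (ν + d) = b ν)
    (B : ℤ → ℤ) (hBm1 : B (-1) = 0) (hB0 : B 0 = 1)
    (hBrec : ∀ ν : ℤ, 1 ≤ ν → B ν = b ν * B (ν - 1) + a ν * B (ν - 2))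
    (Cd Dd Δ : ℤ)
    (hC : B ((d : ℤ) - 1) * Cd = B (2 * (d : ℤ) - 1))
    (hD : Dd = (-1 : ℤ) ^ (d - 1) * ∏ i ∈ Finset.range d, a ((i : ℤ) + 1))
    (hΔ : Δ = Cd ^ 2 + 4 * Dd)
    (hD1 : Dd = 1) :
    HasSum
      (fun n : ℕ =>
        artanh ((B (2 * (d : ℤ) - 1) : ℝ) / (B (2 * ((n : ℤ) + 2) * d - 1) : ℝ)))
      ((1 / 2) * Real.log
        (((B (3 * (d : ℤ) - 1) : ℝ) + (B ((d : ℤ) - 1) : ℝ)) /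
          ((B (3 * (d : ℤ) - 1) : ℝ) - (B ((d : ℤ) - 1) : ℝ)))) := by
  -- coefficient facts with ℕ indices
  have ha' : ∀ k : ℕ, 0 < a ((k : ℤ) + 1) := fun k => ha _ (by omega)
  have hb' : ∀ k : ℕ, 0 < b ((k : ℤ) + 1) := fun k => hb _ (by omega)
  have hpa' : ∀ k : ℕ, a ((k : ℤ) + 1 + (d : ℤ)) = a ((k : ℤ) + 1) := fun k => hpa _ (by omega)
  have hpb' : ∀ k : ℕ, b ((k : ℤ) + 1 + (d : ℤ)) = b ((k : ℤ) + 1) := fun k => hpb _ (by omega)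
  -- translation from B to Bn
  have htB : ∀ k : ℕ, B ((k : ℤ) - 1) = Bn a b k := by
    have key : ∀ k : ℕ, B ((k : ℤ) - 1) = Bn a b k ∧ B ((k : ℤ) + 1 - 1) = Bn a b (k+1) := by
      intro k
      induction k with
      | zero => constructor <;> simp [Bn, hBm1, hB0]
      | succ n ih =>
        have e0 : ((n+1 : ℕ) : ℤ) - 1 = (n : ℤ) + 1 - 1 := by push_cast; ring
        refine ⟨by rw [e0]; exact ih.2, ?_⟩
        have h1 := hBrec ((n : ℤ) + 1) (by omega)
        have e2 : (n : ℤ) + 1 - 2 = (n : ℤ) - 1 := by ring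
        rw [e2, ih.1, ih.2] at h1
        have e3 : ((n+1 : ℕ) : ℤ) + 1 - 1 = (n : ℤ) + 1 := by push_cast; ring
        rw [e3, h1]
        simp [Bn]
    exact fun k => (key k).1
  -- positivity
  have hBnpos : ∀ k : ℕ, 0 ≤ Bn a b k ∧ 0 < Bn a b (k+1) := by
    intro k
    induction k with
    | zero => constructor <;> simp [Bn]
    | succ n ih =>
      refine ⟨le_of_lt ih.2, ?_⟩
      have e : Bn a b (n+2) = b ((n : ℤ) + 1) * Bn a b (n+1) + a ((n : ℤ) + 1) * Bn a b n := by
        simp [Bn]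
      rw [e]
      nlinarith [ha' n, hb' n, ih.1, ih.2]
  have hAnn : ∀ k : ℕ, 0 ≤ An a b k ∧ 0 ≤ An a b (k+1) := by
    intro k
    induction k with
    | zero => constructor <;> simp [An]
    | succ n ih =>
      refine ⟨ih.2, ?_⟩
      have e : An a b (n+2) = b ((n : ℤ) + 1) * An a b (n+1) + a ((n : ℤ) + 1) * An a b n := by
        simp [An]
      rw [e]
      nlinarith [ha' n, hb' n, ih.1, ih.2]
  -- shift identity
  have hshift : ∀ k : ℕ, Bn a b (k+d) = Bn a b (d+1) * Bn a b k + Bn a b d * An a b k ∧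
      An a b (k+d) = An a b (d+1) * Bn a b k + An a b d * An a b k := by
    have key : ∀ k : ℕ,
        (Bn a b (k+d) = Bn a b (d+1) * Bn a b k + Bn a b d * An a b k ∧
          An a b (k+d) = An a b (d+1) * Bn a b k + An a b d * An a b k) ∧
        (Bn a b (k+1+d) = Bn a b (d+1) * Bn a b (k+1) + Bn a b d * An a b (k+1) ∧
          An a b (k+1+d) = An a b (d+1) * Bn a b (k+1) + An a b d * An a b (k+1)) := by
      intro k
      induction k with
      | zero =>
        refine ⟨⟨by simp [Bn, An], by simp [Bn, An]⟩, ?_, ?_⟩ <;>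
          · rw [Nat.add_comm 1 d]; simp [Bn, An]
      | succ n ih =>
        refine ⟨ih.2, ?_, ?_⟩ <;>
        · rw [show n+1+1+d = (n+d)+2 by omega]
          have eB : Bn a b ((n+d)+2)
              = b (((n+d) : ℤ) + 1) * Bn a b ((n+d)+1) + a (((n+d) : ℤ) + 1) * Bn a b (n+d) := by
            simp [Bn]
          have eA : An a b ((n+d)+2)
              = b (((n+d) : ℤ) + 1) * An a b ((n+d)+1) + a (((n+d) : ℤ) + 1) * An a b (n+d) := by
            simp [An]
          rw [eB, eA] at *
          rw [show (n : ℤ) + (d : ℤ) + 1 = (n : ℤ) + 1 + (d : ℤ) by ring, hpa' n, hpb' n]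
          rw [show n+1+d = (n+d)+1 by omega] at ih
          simp only [ih.1.1, ih.1.2, ih.2.1, ih.2.2]
          have eB2 : Bn a b (n+1+1) = b ((n : ℤ) + 1) * Bn a b (n+1) + a ((n : ℤ) + 1) * Bn a b n := by
            simp [Bn]
          have eA2 : An a b (n+1+1) = b ((n : ℤ) + 1) * An a b (n+1) + a ((n : ℤ) + 1) * An a b n := by
            simp [An]
          rw [eB2, eA2]
          ring
    exact fun k => (key k).1
  -- determinant
  have hdet : ∀ k : ℕ, Bn a b k * An a b (k+1) - Bn a b (k+1) * An a b k
      = (-1 : ℤ) ^ (k+1) * ∏ i ∈ Finset.range k, a ((i : ℤ) + 1) := by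
    intro k
    induction k with
    | zero => simp [Bn, An]
    | succ n ih =>
      have eB2 : Bn a b (n+2) = b ((n : ℤ) + 1) * Bn a b (n+1) + a ((n : ℤ) + 1) * Bn a b n := by
        simp [Bn]
      have eA2 : An a b (n+2) = b ((n : ℤ) + 1) * An a b (n+1) + a ((n : ℤ) + 1) * An a b n := by
        simp [An]
      rw [show n+1+1 = n+2 by omega, eB2, eA2, Finset.prod_range_succ, pow_succ]
      rw [pow_succ] at ih
      linear_combination (-(a ((n : ℤ) + 1))) * ih
  have hδ : Bn a b d * An a b (d+1) - Bn a b (d+1) * An a b d = 1 := by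
    have h := hdet d
    have hpow : ((-1 : ℤ)) ^ (d+1) = (-1 : ℤ) ^ (d-1) := by
      obtain ⟨e, he⟩ : ∃ e, d = e + 1 := ⟨d - 1, by omega⟩
      subst he
      simp [pow_succ]
    rw [hpow, ← hD, hD1] at h
    linarith
  -- the subsequence t n = B (n*d - 1)
  obtain ⟨T, hTdef⟩ : ∃ T : ℤ, T = Bn a b (d+1) + An a b d := ⟨_, rfl⟩
  obtain ⟨t, htdef⟩ : ∃ t : ℕ → ℤ, t = fun n => Bn a b (n*d) := ⟨_, rfl⟩
  have ht0 : t 0 = 0 := by simp [htdef, Bn]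
  have hT1 : 1 ≤ T := by
    have h1 := (hBnpos d).2
    have h2 := (hAnn d).1
    omega
  have ht1 : 1 ≤ t 1 := by
    obtain ⟨e, he⟩ : ∃ e, d = e + 1 := ⟨d - 1, by omega⟩
    have h := (hBnpos e).2
    simp only [htdef, he, one_mul]
    omega
  have hT_rec : ∀ n : ℕ, t (n+2) = T * t (n+1) + t n := by
    have htp : ∀ n : ℕ, t (n+1) = Bn a b (d+1) * t n + Bn a b d * An a b (n*d) ∧
        An a b ((n+1)*d) = An a b (d+1) * t n + An a b d * An a b (n*d) := by
      intro n
      have h := hshift (n*d)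
      simp only [htdef]
      rw [show (n+1)*d = n*d+d by ring]
      exact h
    intro n
    have p1 := (htp n).1
    have p2 := (htp n).2
    have p3 := (htp (n+1)).1
    rw [show n+1+1 = n+2 by omega] at p3
    simp only [hTdef]
    linear_combination p3 + Bn a b d * p2 - An a b d * p1 + t n * hδ
  have ht2 : t 2 = T * t 1 := by
    have h := hT_rec 0
    norm_num [ht0] at h
    linarith
  have hpos : ∀ n : ℕ, 0 ≤ t n ∧ 1 ≤ t (n+1) := by
    intro n
    induction n with
    | zero => exact ⟨le_of_eq ht0.symm, ht1⟩
    | succ m ih =>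
      refine ⟨by omega, ?_⟩
      have h := hT_rec m
      nlinarith [ih.1, ih.2, hT1]
  have hmono : ∀ n : ℕ, t n ≤ t (n+1) := by
    intro n
    match n with
    | 0 => rw [ht0]; linarith [ht1]
    | m+1 =>
      have h := hT_rec m
      nlinarith [(hpos m).1, (hpos m).2, hT1]
  have hmono' : ∀ m n : ℕ, m ≤ n → t m ≤ t n := fun m n h =>
    monotone_nat_of_le_succ hmono h
  have hstrict1 : t 1 < t 3 := by
    have h := hT_rec 1
    nlinarith [(hpos 0).2, (hpos 1).2, hT1]
  have hstrict2 : t 2 < t 4 := by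
    have h := hT_rec 2
    nlinarith [(hpos 1).2, (hpos 2).2, hT1]
  have hgrow : ∀ n : ℕ, 2^n * t 3 ≤ t (2*n+3) := by
    intro n
    induction n with
    | zero => simp
    | succ m ih =>
      have h := hT_rec (2*m+3)
      rw [show 2*m+3+2 = 2*(m+1)+3 by ring, show 2*m+3+1 = 2*m+4 by ring] at h
      have hm : t (2*m+3) ≤ t (2*m+4) := hmono _
      have h3 : 1 ≤ t 3 := (hpos 2).2
      have h4 : (0:ℤ) ≤ t (2*m+4) := (hpos _).1
      have h5 : t (2*m+4) ≤ T * t (2*m+4) := le_mul_of_one_le_left h4 hT1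
      rw [pow_succ]
      nlinarith [ih, h5, hm, h3]
  have hcat : ∀ n : ℕ, t n * t (n+2) - t (n+1)^2 = (-1 : ℤ)^(n+1) * (t 1)^2 := by
    intro n
    induction n with
    | zero => rw [ht0]; ring
    | succ m ih =>
      have h1 := hT_rec (m+1)
      have h2 := hT_rec m
      rw [pow_succ]
      rw [show m+1+1 = m+2 by ring] at *
      linear_combination t (m+1) * h1 - t (m+2) * h2 - ih
  have hcat' : ∀ n : ℕ, t (2*n+3) * t (2*n+5) - t (2*n+4)^2 = (t 1)^2 := by
    intro n
    have h := hcat (2*n+3)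
    rw [show 2*n+3+2 = 2*n+5 by ring, show 2*n+3+1 = 2*n+4 by ring,
      show 2*n+3+1 = 2*(n+2) by ring] at h
    rw [pow_mul] at h
    rw [show 2*(n+2) = 2*n+4 by ring] at h
    simpa using h
  have hr : ∀ n : ℕ, t (2*n+5) = T * t (2*n+4) + t (2*n+3) := by
    intro n
    have h := hT_rec (2*n+3)
    rwa [show 2*n+3+2 = 2*n+5 by ring, show 2*n+3+1 = 2*n+4 by ring] at h
  have hI1 : ∀ n : ℕ, (t (2*n+3) + t 1) * (t (2*n+5) - t 1)
      = t (2*n+4) * (t (2*n+4) + t 2) := by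
    intro n
    linear_combination hcat' n + t 1 * hr n - t (2*n+4) * ht2
  have hI2 : ∀ n : ℕ, (t (2*n+3) - t 1) * (t (2*n+5) + t 1)
      = t (2*n+4) * (t (2*n+4) - t 2) := by
    intro n
    linear_combination hcat' n - t 1 * hr n + t (2*n+4) * ht2
  -- strict comparisons for all later indices
  have hm3 : ∀ m : ℕ, 3 ≤ m → t 1 < t m := fun m hm => lt_of_lt_of_le hstrict1 (hmono' 3 m hm)
  have hm4 : ∀ m : ℕ, 4 ≤ m → t 2 < t m := fun m hm => lt_of_lt_of_le hstrict2 (hmono' 4 m hm)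
  have ht2pos : 1 ≤ t 2 := (hpos 1).2
  obtain ⟨F, hFdef⟩ : ∃ F : ℕ → ℝ, F = fun n =>
      (1/2) * Real.log (((t (2*n+3) : ℝ) + (t 1 : ℝ)) / ((t (2*n+3) : ℝ) - (t 1 : ℝ))) := ⟨_, rfl⟩
  have hartanh : ∀ x y : ℤ, 0 < y → y < x →
      artanh ((y : ℝ) / (x : ℝ)) = (1/2) * Real.log (((x:ℝ) + y) / ((x:ℝ) - y)) := by
    intro x y hy hxy
    have hy' : (0:ℝ) < y := by exact_mod_cast hy
    have hx' : (y:ℝ) < x := by exact_mod_cast hxy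
    have hx0 : (x:ℝ) ≠ 0 := by linarith
    have hxy0 : (x:ℝ) - y ≠ 0 := by intro h; apply hx0; linarith [sub_eq_zero.mp h]
    simp only [artanh]
    congr 2
    field_simp
  have hterm : ∀ n : ℕ, artanh ((t 2 : ℝ) / (t (2*n+4) : ℝ)) = F n - F (n+1) := by
    intro n
    have h4 : t 2 < t (2*n+4) := hm4 _ (by omega)
    have h3 : t 1 < t (2*n+3) := hm3 _ (by omega)
    have h5 : t 1 < t (2*n+5) := hm3 _ (by omega)
    have c1 : (0:ℝ) < (t (2*n+3) : ℝ) - t 1 := by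
      have : (0:ℤ) < t (2*n+3) - t 1 := by linarith
      exact_mod_cast this
    have c2 : (0:ℝ) < (t (2*n+3) : ℝ) + t 1 := by
      have : (0:ℤ) < t (2*n+3) + t 1 := by linarith [ht1]
      exact_mod_cast this
    have c3 : (0:ℝ) < (t (2*n+5) : ℝ) - t 1 := by
      have : (0:ℤ) < t (2*n+5) - t 1 := by linarith
      exact_mod_cast this
    have c4 : (0:ℝ) < (t (2*n+5) : ℝ) + t 1 := by
      have : (0:ℤ) < t (2*n+5) + t 1 := by linarith [ht1]
      exact_mod_cast this
    have c5 : (0:ℝ) < (t (2*n+4) : ℝ) - t 2 := by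
      have : (0:ℤ) < t (2*n+4) - t 2 := by linarith
      exact_mod_cast this
    have c6 : (0:ℝ) < (t (2*n+4) : ℝ) + t 2 := by
      have : (0:ℤ) < t (2*n+4) + t 2 := by linarith [ht2pos]
      exact_mod_cast this
    rw [hartanh _ _ (by linarith [ht2pos] : (0:ℤ) < t 2) h4]
    simp only [hFdef]
    rw [show 2*(n+1)+3 = 2*n+5 by ring]
    rw [← mul_sub, ← Real.log_div (ne_of_gt (div_pos c2 c1)) (ne_of_gt (div_pos c4 c3))]
    have i1 : ((t (2*n+3) : ℝ) + t 1) * ((t (2*n+5) : ℝ) - t 1)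
        = (t (2*n+4) : ℝ) * ((t (2*n+4) : ℝ) + t 2) := by exact_mod_cast hI1 n
    have i2 : ((t (2*n+3) : ℝ) - t 1) * ((t (2*n+5) : ℝ) + t 1)
        = (t (2*n+4) : ℝ) * ((t (2*n+4) : ℝ) - t 2) := by exact_mod_cast hI2 n
    have hfrac : ((t (2*n+4) : ℝ) + t 2) / ((t (2*n+4) : ℝ) - t 2)
        = (((t (2*n+3) : ℝ) + t 1) / ((t (2*n+3) : ℝ) - t 1))
          / (((t (2*n+5) : ℝ) + t 1) / ((t (2*n+5) : ℝ) - t 1)) := by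
      have d1 : ((t (2*n+3) : ℝ) - t 1) ≠ 0 := ne_of_gt c1
      have d3 : ((t (2*n+5) : ℝ) - t 1) ≠ 0 := ne_of_gt c3
      have d4 : ((t (2*n+5) : ℝ) + t 1) ≠ 0 := ne_of_gt c4
      have d5 : ((t (2*n+4) : ℝ) - t 2) ≠ 0 := ne_of_gt c5
      field_simp
      linear_combination ((t (2*n+4):ℝ) + t 2) * i2 - ((t (2*n+4):ℝ) - t 2) * i1
    rw [hfrac]
  -- translate B-values in the goal
  have e1 : B (2 * (d:ℤ) - 1) = t 2 := by
    rw [show (2:ℤ) * (d:ℤ) - 1 = ((2*d : ℕ) : ℤ) - 1 by push_cast; ring, htB (2*d)]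
    simp only [htdef]
  have e2 : ∀ n : ℕ, B (2 * ((n:ℤ) + 2) * d - 1) = t (2*n+4) := by
    intro n
    rw [show 2 * ((n:ℤ) + 2) * (d:ℤ) - 1 = (((2*n+4)*d : ℕ) : ℤ) - 1 by push_cast; ring,
      htB ((2*n+4)*d)]
    simp only [htdef]
  have e3 : B (3 * (d:ℤ) - 1) = t 3 := by
    rw [show (3:ℤ) * (d:ℤ) - 1 = ((3*d : ℕ) : ℤ) - 1 by push_cast; ring, htB (3*d)]
    simp only [htdef]
  have e4 : B ((d:ℤ) - 1) = t 1 := by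
    rw [show (d:ℤ) - 1 = ((d : ℕ) : ℤ) - 1 by norm_num, htB d]
    simp only [htdef, one_mul]
  simp only [e1, e2, e3, e4]
  have hgoalR : (1/2 : ℝ) * Real.log (((t 3 : ℝ) + (t 1 : ℝ)) / ((t 3 : ℝ) - (t 1 : ℝ))) = F 0 := by
    simp only [hFdef]
  rw [hgoalR]
  have hfun : (fun n : ℕ => artanh ((t 2 : ℝ) / (t (2*n+4) : ℝ)))
      = fun n => F n - F (n+1) := funext hterm
  rw [hfun]
  -- nonnegativity
  have hFnonneg : ∀ n, 0 ≤ F n := by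
    intro n
    have h3 : t 1 < t (2*n+3) := hm3 _ (by omega)
    have c1 : (0:ℝ) < (t (2*n+3) : ℝ) - t 1 := by
      have : (0:ℤ) < t (2*n+3) - t 1 := by linarith
      exact_mod_cast this
    have ht1R : (1:ℝ) ≤ (t 1 : ℝ) := by exact_mod_cast ht1
    simp only [hFdef]
    apply mul_nonneg (by norm_num)
    exact Real.log_nonneg ((one_le_div c1).mpr (by linarith))
  have htermnn : ∀ n, 0 ≤ F n - F (n+1) := by
    intro n
    rw [← hterm n]
    rw [hartanh _ _ (by linarith [ht2pos] : (0:ℤ) < t 2) (hm4 _ (by omega))]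
    apply mul_nonneg (by norm_num)
    apply Real.log_nonneg
    have c5 : (0:ℝ) < (t (2*n+4) : ℝ) - t 2 := by
      have := hm4 (2*n+4) (by omega)
      have : (0:ℤ) < t (2*n+4) - t 2 := by linarith
      exact_mod_cast this
    have ht2R : (1:ℝ) ≤ (t 2 : ℝ) := by exact_mod_cast ht2pos
    exact (one_le_div c5).mpr (by linarith)
  -- summability
  have hsum : Summable (fun n => F n - F (n+1)) := by
    apply summable_of_sum_range_le htermnn
    intro n
    rw [Finset.sum_range_sub' F n]
    linarith [hFnonneg n]
  -- F tends to 0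
  have hF0 : Filter.Tendsto F Filter.atTop (nhds 0) := by
    have hbound : ∀ n : ℕ, F n ≤ (t 1 : ℝ) * (1/2)^n := by
      intro n
      have h3 : t 1 < t (2*n+3) := hm3 _ (by omega)
      have hd2 : (2:ℤ)^n ≤ t (2*n+3) - t 1 := by
        have hg := hgrow n
        have h31 : t 1 + 1 ≤ t 3 := by linarith [hstrict1]
        have hp2 : (1:ℤ) ≤ 2^n := by exact_mod_cast Nat.one_le_two_pow
        have hb2 : (2:ℤ)^n * (t 1 + 1) ≤ 2^n * t 3 :=
          mul_le_mul_of_nonneg_left h31 (by positivity)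
        have hc2 : t 1 ≤ 2^n * t 1 :=
          le_mul_of_one_le_left (by linarith [ht1]) hp2
        nlinarith [hg, hb2, hc2]
      have c1 : (0:ℝ) < (t (2*n+3) : ℝ) - t 1 := by
        have : (0:ℤ) < t (2*n+3) - t 1 := by linarith
        exact_mod_cast this
      have ht1R : (1:ℝ) ≤ (t 1 : ℝ) := by exact_mod_cast ht1
      have cX : (0:ℝ) < ((t (2*n+3) : ℝ) + t 1) / ((t (2*n+3) : ℝ) - t 1) := by
        apply div_pos _ c1
        linarith
      have hd2R : (2:ℝ)^n ≤ (t (2*n+3) : ℝ) - t 1 := by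
        have := hd2
        have h' : ((2:ℤ)^n : ℝ) ≤ ((t (2*n+3) - t 1 : ℤ) : ℝ) := by exact_mod_cast this
        push_cast at h'
        linarith
      simp only [hFdef]
      have hlog := Real.log_le_sub_one_of_pos cX
      have step1 : (1/2 : ℝ) * Real.log (((t (2*n+3) : ℝ) + t 1) / ((t (2*n+3) : ℝ) - t 1))
          ≤ (t 1 : ℝ) / ((t (2*n+3) : ℝ) - t 1) := by
        have heq : (((t (2*n+3) : ℝ) + t 1) / ((t (2*n+3) : ℝ) - t 1) - 1)
            = 2 * (t 1 : ℝ) / ((t (2*n+3) : ℝ) - t 1) := by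
          field_simp
          ring
        rw [heq] at hlog
        have hhalf : 2 * ((t 1 : ℝ) / ((t (2*n+3) : ℝ) - t 1))
            = 2 * (t 1 : ℝ) / ((t (2*n+3) : ℝ) - t 1) := by ring
        linarith [hlog, hhalf]
      have step2 : (t 1 : ℝ) / ((t (2*n+3) : ℝ) - t 1) ≤ (t 1 : ℝ) / (2:ℝ)^n := by
        apply div_le_div_of_nonneg_left (by linarith) (by positivity) hd2R
      have step3 : (t 1 : ℝ) / (2:ℝ)^n = (t 1 : ℝ) * (1/2)^n := by
        rw [one_div, inv_pow, ← div_eq_mul_inv]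
      linarith [step1, step2, step3.le]
    apply squeeze_zero hFnonneg hbound
    have h := tendsto_pow_atTop_nhds_zero_of_lt_one (by norm_num : (0:ℝ) ≤ 1/2)
      (by norm_num : (1/2:ℝ) < 1)
    simpa using h.const_mul ((t 1 : ℝ))
  refine (Summable.hasSum_iff_tendsto_nat hsum).mpr ?_
  have hps : (fun n => ∑ i ∈ Finset.range n, (F i - F (i+1))) = fun n => F 0 - F n :=
    funext (fun n => Finset.sum_range_sub' F n)
  rw [hps]
  simpa using Filter.Tendsto.sub (tendsto_const_nhds : Filter.Tendsto (fun _ : ℕ => F 0) Filter.atTop (nhds (F 0))) hF0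
end

section
/- For all positive integers m and n, if m divides n then the integer B_{md−1} divides B_{nd−1}. -/
/-- Transfer matrix at step ν. -/
def Mmat (a b : ℤ → ℤ) (ν : ℕ) : Matrix (Fin 2) (Fin 2) ℤ :=
  !![b ν, a ν; 1, 0]

/-- Product of transfer matrices starting after index `k`. -/
def Tmat (a b : ℤ → ℤ) (k : ℕ) : ℕ → Matrix (Fin 2) (Fin 2) ℤ
  | 0 => 1
  | t + 1 => Mmat a b (k + t + 1) * Tmat a b k t

lemma Tmat_shift (a b : ℤ → ℤ) (k t : ℕ) :
    Tmat a b 0 (k + t) = Tmat a b k t * Tmat a b 0 k := by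
  induction t with
  | zero => simp [Tmat]
  | succ t ih =>
      show Tmat a b 0 (k + t + 1) = _
      simp only [Tmat, ih]
      rw [Nat.zero_add, mul_assoc]

lemma pow_entry_dvd (R : Matrix (Fin 2) (Fin 2) ℤ) (k : ℕ) :
    R 1 0 ∣ (R ^ k) 1 0 := by
  induction k with
  | zero => simp [Matrix.one_apply]
  | succ k ih =>
      rw [pow_succ, Matrix.mul_apply, Fin.sum_univ_two]
      exact dvd_add (Dvd.dvd.mul_right ih _) (dvd_mul_left _ _)

/-- `(B_{nd−1})_{n≥1}` is a divisibility sequence: if `m ∣ n` then `B_{md−1} ∣ B_{nd−1}`. -/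
theorem divisibility_sequence
    (d : ℕ) (hd : 1 ≤ d) (a b : ℤ → ℤ)
    (ha : ∀ ν : ℤ, 1 ≤ ν → 0 < a ν) (hb : ∀ ν : ℤ, 1 ≤ ν → 0 < b ν)
    (hpa : ∀ ν : ℤ, 1 ≤ ν → a (ν + d) = a ν) (hpb : ∀ ν : ℤ, 1 ≤ ν → b (ν + d) = b ν)
    (B : ℤ → ℤ) (hBm1 : B (-1) = 0) (hB0 : B 0 = 1)
    (hBrec : ∀ ν : ℤ, 1 ≤ ν → B ν = b ν * B (ν - 1) + a ν * B (ν - 2)) :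
    ∀ m n : ℕ, 1 ≤ m → 1 ≤ n → m ∣ n →
      B ((m : ℤ) * d - 1) ∣ B ((n : ℤ) * d - 1) := by
  -- periodicity for multiples of d
  have perA : ∀ k : ℕ, ∀ ν : ℤ, 1 ≤ ν → a (ν + (k : ℤ) * d) = a ν := by
    intro k
    induction k with
    | zero => intro ν hν; simp
    | succ k ih =>
        intro ν hν
        have h1 : (1 : ℤ) ≤ ν + (k : ℤ) * d := by
          have : (0:ℤ) ≤ (k : ℤ) * d := by positivity
          linarith
        have : ν + ((k : ℤ) + 1) * d = (ν + (k : ℤ) * d) + d := by ring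
        rw [← ih ν hν, ← hpa (ν + (k : ℤ) * d) h1]
        push_cast
        rw [this]
  have perB : ∀ k : ℕ, ∀ ν : ℤ, 1 ≤ ν → b (ν + (k : ℤ) * d) = b ν := by
    intro k
    induction k with
    | zero => intro ν hν; simp
    | succ k ih =>
        intro ν hν
        have h1 : (1 : ℤ) ≤ ν + (k : ℤ) * d := by
          have : (0:ℤ) ≤ (k : ℤ) * d := by positivity
          linarith
        have : ν + ((k : ℤ) + 1) * d = (ν + (k : ℤ) * d) + d := by ring
        rw [← ih ν hν, ← hpb (ν + (k : ℤ) * d) h1]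
        push_cast
        rw [this]
  have perM : ∀ n ν : ℕ, 1 ≤ ν → Mmat a b (ν + n * d) = Mmat a b ν := by
    intro n ν hν
    have hν' : (1 : ℤ) ≤ (ν : ℤ) := by exact_mod_cast hν
    have hA := perA n ν hν'
    have hB' := perB n ν hν'
    unfold Mmat
    congr 1 <;> push_cast <;> rw [hA, hB']
  -- the entries of Tmat a b 0 are the B's
  have entries : ∀ ν : ℕ, Tmat a b 0 ν 0 0 = B ν ∧ Tmat a b 0 ν 1 0 = B ((ν : ℤ) - 1) := by
    intro ν
    induction ν with
    | zero => simp [Tmat, Matrix.one_apply, hB0, hBm1]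
    | succ ν ih =>
        obtain ⟨ih0, ih1⟩ := ih
        have hrec := hBrec ((ν : ℤ) + 1) (by
          have : (0:ℤ) ≤ (ν:ℤ) := Int.natCast_nonneg ν
          linarith)
        constructor
        · show (Mmat a b (0 + ν + 1) * Tmat a b 0 ν) 0 0 = _
          rw [Matrix.mul_apply, Fin.sum_univ_two]
          simp only [Mmat]
          norm_num [ih0, ih1]
          push_cast
          rw [hrec]
          ring_nf
        · show (Mmat a b (0 + ν + 1) * Tmat a b 0 ν) 1 0 = _
          rw [Matrix.mul_apply, Fin.sum_univ_two]
          simp only [Mmat]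
          norm_num [ih0, ih1]
  -- Tmat at offset a multiple of d equals Tmat at offset 0
  have Tper : ∀ n t : ℕ, Tmat a b (n * d) t = Tmat a b 0 t := by
    intro n t
    induction t with
    | zero => rfl
    | succ t ih =>
        show Mmat a b (n * d + t + 1) * _ = Mmat a b (0 + t + 1) * _
        rw [ih]
        congr 1
        have : n * d + t + 1 = (t + 1) + n * d := by ring
        rw [this, perM n (t + 1) (by omega), Nat.zero_add]
  -- Tmat 0 (n*d) = (Tmat 0 d)^n
  have Tpow : ∀ n : ℕ, Tmat a b 0 (n * d) = (Tmat a b 0 d) ^ n := by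
    intro n
    induction n with
    | zero => simp [Tmat]
    | succ n ih =>
        have : (n + 1) * d = n * d + d := by ring
        rw [this, Tmat_shift, Tper, ih, pow_succ']
  intro m n hm hn hmn
  obtain ⟨k, hk⟩ := hmn
  have hBm : B ((m : ℤ) * d - 1) = Tmat a b 0 (m * d) 1 0 := by
    rw [(entries (m * d)).2]; push_cast; ring_nf
  have hBn : B ((n : ℤ) * d - 1) = Tmat a b 0 (n * d) 1 0 := by
    rw [(entries (n * d)).2]; push_cast; ring_nf
  rw [hBm, hBn, Tpow, Tpow, hk, pow_mul]
  exact pow_entry_dvd _ k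
end

section
/- Let p be an odd prime not dividing C_d·D_d, and let r ≥ −1 be an integer. If the Legendre symbol (Δ | p) equals 1, then B_{(p+1)d+r} ≡ C_d·B_{d+r} + D_d·B_r (mod p); in particular B_{(p+1)d−1} ≡ C_d·B_{d−1} (mod p). If the Legendre symbol (Δ | p) equals −1, then B_{(p+1)d+r} ≡ −D_d·B_r (mod p); in particular B_{(p+1)d−1} ≡ 0 (mod p). -/
private lemma aux_two_step {P : ℕ → Prop} (h0 : P 0) (h1 : P 1)
    (ih : ∀ n, P n → P (n + 1) → P (n + 2)) : ∀ n, P n := by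
  have key : ∀ n, P n ∧ P (n + 1) := by
    intro n
    induction n with
    | zero => exact ⟨h0, h1⟩
    | succ k hk => exact ⟨hk.2, ih k hk.1 hk.2⟩
  exact fun n => (key n).1

/-- A two-term recurrence sequence indexed by `ℕ`, with prescribed initial values. -/
private def seqAux (a b : ℤ → ℤ) (x0 x1 : ℤ) : ℕ → ℤ
  | 0 => x0
  | 1 => x1
  | n + 2 => b ((n : ℤ) + 1) * seqAux a b x0 x1 (n + 1) + a ((n : ℤ) + 1) * seqAux a b x0 x1 n

private lemma seqAux_rec (a b : ℤ → ℤ) (x0 x1 : ℤ) (n : ℕ) :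
    seqAux a b x0 x1 (n + 2) =
      b ((n : ℤ) + 1) * seqAux a b x0 x1 (n + 1) + a ((n : ℤ) + 1) * seqAux a b x0 x1 n := rfl

private lemma lucas_aux {R : Type*} [CommRing R] (C D x y : R) (hs : x + y = C)
    (hp : x * y = -D) (u : ℕ → R) (hu : ∀ k, u (k + 2) = C * u (k + 1) + D * u k) :
    ∀ k, (y - x) * u k = y ^ k * (u 1 - x * u 0) - x ^ k * (u 1 - y * u 0) := by
  have key : ∀ k, (u (k + 1) - x * u k = y ^ k * (u 1 - x * u 0)) ∧
      (u (k + 1) - y * u k = x ^ k * (u 1 - y * u 0)) := by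
    intro k
    induction k with
    | zero => simp
    | succ n ih =>
      constructor
      · rw [pow_succ]
        linear_combination hu n + (- u (n + 1)) * hs + u n * hp + y * ih.1
      · rw [pow_succ]
        linear_combination hu n + (- u (n + 1)) * hs + u n * hp + x * ih.2
  intro k
  linear_combination (key k).1 - (key k).2

/-- Congruences for `B_{(p+1)d+r}` modulo an odd prime `p ∤ C_d·D_d`, according to whether
`Δ` is a quadratic residue or non-residue modulo `p`. -/
theorem divisibility_p_plus_one
    (d : ℕ) (hd : 1 ≤ d) (a b : ℤ → ℤ)
    (ha : ∀ ν : ℤ, 1 ≤ ν → 0 < a ν) (hb : ∀ ν : ℤ, 1 ≤ ν → 0 < b ν)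
    (hpa : ∀ ν : ℤ, 1 ≤ ν → a (ν + d) = a ν) (hpb : ∀ ν : ℤ, 1 ≤ ν → b (ν + d) = b ν)
    (B : ℤ → ℤ) (hBm1 : B (-1) = 0) (hB0 : B 0 = 1)
    (hBrec : ∀ ν : ℤ, 1 ≤ ν → B ν = b ν * B (ν - 1) + a ν * B (ν - 2))
    (Cd Dd Δ : ℤ)
    (hC : B ((d : ℤ) - 1) * Cd = B (2 * (d : ℤ) - 1))
    (hD : Dd = (-1 : ℤ) ^ (d - 1) * ∏ i ∈ Finset.range d, a ((i : ℤ) + 1))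
    (hΔ : Δ = Cd ^ 2 + 4 * Dd)
    (p : ℕ) [Fact p.Prime] (hodd : p ≠ 2) (hpCD : ¬ (p : ℤ) ∣ Cd * Dd) :
    ∀ r : ℤ, -1 ≤ r →
      (legendreSym p Δ = 1 →
        B (((p : ℤ) + 1) * d + r) ≡ Cd * B ((d : ℤ) + r) + Dd * B r [ZMOD p] ∧
        B (((p : ℤ) + 1) * d - 1) ≡ Cd * B ((d : ℤ) - 1) [ZMOD p]) ∧
      (legendreSym p Δ = -1 →
        B (((p : ℤ) + 1) * d + r) ≡ -Dd * B r [ZMOD p] ∧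
        B (((p : ℤ) + 1) * d - 1) ≡ 0 [ZMOD p]) := by
  classical
  set N : ℕ → ℤ := seqAux a b 0 1 with hNdef
  set Am : ℕ → ℤ := seqAux a b 1 0 with hAmdef
  -- relation B = N
  have hBN : ∀ n : ℕ, B ((n : ℤ) - 1) = N n := by
    apply aux_two_step
    · simpa [hNdef, seqAux] using hBm1
    · simpa [hNdef, seqAux] using hB0
    · intro n ih1 ih2
      have h := hBrec ((n : ℤ) + 1) (by omega)
      have e1 : ((n : ℤ) + 1) - 1 = ((n + 1 : ℕ) : ℤ) - 1 := by push_cast; ring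
      have e2 : ((n : ℤ) + 1) - 2 = ((n : ℕ) : ℤ) - 1 := by push_cast; ring
      rw [e1, e2, ih1, ih2] at h
      rw [show (((n + 2 : ℕ) : ℤ)) - 1 = (n : ℤ) + 1 by push_cast; ring, h,
        hNdef, seqAux_rec]
  -- the shift identity
  have shift : ∀ x0 x1 : ℤ, ∀ n : ℕ, seqAux a b x0 x1 (d + n) =
      N n * seqAux a b x0 x1 (d + 1) + Am n * seqAux a b x0 x1 d := by
    intro x0 x1
    apply aux_two_step
    · simp [hNdef, hAmdef, seqAux]
    · simp [hNdef, hAmdef, seqAux]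
    · intro n ih1 ih2
      have e : d + (n + 2) = (d + n) + 2 := by ring
      rw [e, seqAux_rec]
      have ecast : ((d + n : ℕ) : ℤ) + 1 = ((n : ℤ) + 1) + (d : ℤ) := by push_cast; ring
      rw [ecast, hpa _ (by omega), hpb _ (by omega)]
      rw [show d + (n + 1) = (d + n) + 1 from by ring] at ih2
      rw [ih1, ih2, hNdef, hAmdef, seqAux_rec, seqAux_rec]
      ring
  -- the determinant identity
  have det : ∀ n : ℕ, N (n + 1) * Am n - Am (n + 1) * N n =
      (-1 : ℤ) ^ n * ∏ i ∈ Finset.range n, a ((i : ℤ) + 1) := by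
    intro n
    induction n with
    | zero => simp [hNdef, hAmdef, seqAux]
    | succ k ih =>
      rw [hNdef, hAmdef, seqAux_rec, seqAux_rec, Finset.prod_range_succ, pow_succ]
      rw [← hNdef, ← hAmdef]
      push_cast
      linear_combination (-(a ((k : ℤ) + 1))) * ih
  -- positivity of N
  have hNpos : ∀ n : ℕ, 0 ≤ N n ∧ (1 ≤ n → 0 < N n) := by
    apply aux_two_step
    · exact ⟨le_refl 0, by omega⟩
    · exact ⟨zero_le_one, fun _ => zero_lt_one⟩
    · intro n ih1 ih2
      have hbp := hb ((n : ℤ) + 1) (by omega)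
      have hap := ha ((n : ℤ) + 1) (by omega)
      have hrec : N (n + 2) = b ((n : ℤ) + 1) * N (n + 1) + a ((n : ℤ) + 1) * N n :=
        seqAux_rec a b 0 1 n
      have h1 := ih1.1
      have h2 := ih2.2 (by omega)
      constructor
      · nlinarith
      · intro _; nlinarith
  have hNd0 : N d ≠ 0 := ne_of_gt ((hNpos d).2 hd)
  -- Cd equals the trace
  have hCd : Cd = N (d + 1) + Am d := by
    have h1 : N (d + d) = N d * N (d + 1) + Am d * N d := shift 0 1 d
    have h2 : B (((2 * d : ℕ) : ℤ) - 1) = N (2 * d) := hBN (2 * d)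
    have h3 : B (((d : ℕ) : ℤ) - 1) = N d := hBN d
    rw [show ((2 * d : ℕ) : ℤ) - 1 = 2 * (d : ℤ) - 1 by push_cast; ring] at h2
    have hC' : N d * Cd = N (2 * d) := by rw [← h3, ← h2]; exact hC
    rw [show d + d = 2 * d from by ring] at h1
    apply mul_left_cancel₀ hNd0
    rw [hC', h1]; ring
  -- Dd equals minus the determinant
  have hDd : Dd = Am (d + 1) * N d - N (d + 1) * Am d := by
    obtain ⟨e, rfl⟩ : ∃ e, d = e + 1 := ⟨d - 1, by omega⟩
    have h := det (e + 1)
    rw [hD]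
    simp only [Nat.add_sub_cancel]
    rw [show ((-1 : ℤ)) ^ (e + 1) = -(-1 : ℤ) ^ e from by ring] at h
    linear_combination h
  -- the key doubling identity
  have key : ∀ n : ℕ, N (2 * d + n) = Cd * N (d + n) + Dd * N n := by
    intro n
    have h1 : N (d + (d + n)) = N (d + n) * N (d + 1) + Am (d + n) * N d := shift 0 1 (d + n)
    have h2 : Am (d + n) = N n * Am (d + 1) + Am n * Am d := shift 1 0 n
    have h3 : N (d + n) = N n * N (d + 1) + Am n * N d := shift 0 1 n
    rw [show 2 * d + n = d + (d + n) from by ring, h1, hCd, hDd, h2, h3]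
    ring
  -- two is nonzero mod p
  have hp2 : (2 : ZMod p) ≠ 0 := by
    intro h
    have h2 : ((2 : ℕ) : ZMod p) = 0 := by exact_mod_cast h
    rw [ZMod.natCast_eq_zero_iff] at h2
    exact hodd ((Nat.prime_dvd_prime_iff_eq (Fact.out) Nat.prime_two).mp h2)
  have hoddp : Odd p := (Fact.out : p.Prime).odd_of_ne_two hodd
  -- The main congruence for all m : ℕ
  have main : ∀ m : ℕ,
      (legendreSym p Δ = 1 →
        ((N ((p + 1) * d + m) : ℤ) : ZMod p) =
          (Cd : ZMod p) * ((N (d + m) : ℤ) : ZMod p) + (Dd : ZMod p) * ((N m : ℤ) : ZMod p)) ∧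
      (legendreSym p Δ = -1 →
        ((N ((p + 1) * d + m) : ℤ) : ZMod p) = -(Dd : ZMod p) * ((N m : ℤ) : ZMod p)) := by
    intro m
    set u : ℕ → ZMod p := fun k => ((N (k * d + m) : ℤ) : ZMod p) with hu_def
    have hu : ∀ k, u (k + 2) = (Cd : ZMod p) * u (k + 1) + (Dd : ZMod p) * u k := by
      intro k
      have h := key (k * d + m)
      rw [show 2 * d + (k * d + m) = (k + 2) * d + m from by ring,
        show d + (k * d + m) = (k + 1) * d + m from by ring] at h
      show ((N ((k + 2) * d + m) : ℤ) : ZMod p) = _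
      rw [h]
      push_cast
      ring
    have hΔcast : ((Δ : ℤ) : ZMod p) = (Cd : ZMod p) ^ 2 + 4 * (Dd : ZMod p) := by
      rw [hΔ]; push_cast; ring
    constructor
    · -- residue case
      intro hleg
      have hΔ0 : ((Δ : ℤ) : ZMod p) ≠ 0 := by
        intro h
        rw [(legendreSym.eq_zero_iff p Δ).mpr h] at hleg
        norm_num at hleg
      obtain ⟨s, hs⟩ : IsSquare ((Δ : ℤ) : ZMod p) := (legendreSym.eq_one_iff p hΔ0).mp hleg
      have hs0 : s ≠ 0 := by
        intro h; rw [h, mul_zero] at hs; exact hΔ0 hs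
      set x : ZMod p := ((Cd : ZMod p) + s) * (2 : ZMod p)⁻¹ with hx
      set y : ZMod p := ((Cd : ZMod p) - s) * (2 : ZMod p)⁻¹ with hy
      have h2i : (2 : ZMod p)⁻¹ * 2 = 1 := inv_mul_cancel₀ hp2
      have hsum : x + y = (Cd : ZMod p) := by
        rw [hx, hy]
        field_simp
        ring
      have hprod : x * y = -(Dd : ZMod p) := by
        rw [hx, hy]
        have hss : s * s = (Cd : ZMod p) ^ 2 + 4 * (Dd : ZMod p) := by
          rw [← hs, hΔcast]
        field_simp
        linear_combination -hss
      have hyx : y - x = -s := by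
        rw [hx, hy]
        field_simp
        ring
      have hyx0 : y - x ≠ 0 := by rw [hyx]; exact neg_ne_zero.mpr hs0
      have L := lucas_aux (Cd : ZMod p) (Dd : ZMod p) x y hsum hprod u hu
      have e1 := L (p + 1)
      have e2 := L 2
      have hxp : x ^ (p + 1) = x ^ 2 := by rw [pow_succ, ZMod.pow_card, sq]
      have hyp : y ^ (p + 1) = y ^ 2 := by rw [pow_succ, ZMod.pow_card, sq]
      rw [hxp, hyp, ← e2] at e1
      have heq : u (p + 1) = u 2 := mul_left_cancel₀ hyx0 e1
      have h2 := hu 0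
      norm_num at h2
      rw [h2] at heq
      simpa [hu_def] using heq
    · -- non-residue case
      intro hleg
      have hΔ0 : ((Δ : ℤ) : ZMod p) ≠ 0 := by
        intro h
        rw [(legendreSym.eq_zero_iff p Δ).mpr h] at hleg
        norm_num at hleg
      set Δ' : ZMod p := ((Δ : ℤ) : ZMod p) with hΔ'def
      set f : Polynomial (ZMod p) := Polynomial.X ^ 2 - Polynomial.C Δ' with hfdef
      have hdeg : f.degree = 2 := by
        rw [hfdef]
        exact Polynomial.degree_X_pow_sub_C (by norm_num) Δ'
      have hdeg0 : f.degree ≠ 0 := by rw [hdeg]; norm_num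
      set φ : ZMod p →+* AdjoinRoot f := AdjoinRoot.of f with hφdef
      have hinj : Function.Injective φ := AdjoinRoot.coe_injective hdeg0
      haveI : CharP (AdjoinRoot f) p := charP_of_injective_ringHom hinj p
      set s : AdjoinRoot f := AdjoinRoot.root f with hsdef
      have hs : s ^ 2 = φ Δ' := by
        have h := AdjoinRoot.eval₂_root f
        rw [hfdef] at h
        simp only [Polynomial.eval₂_sub, Polynomial.eval₂_pow, Polynomial.eval₂_X,
          Polynomial.eval₂_C] at h
        rw [hsdef, hφdef, ← sub_eq_zero]
        rw [← hfdef] at h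
        exact h
      set i2 : ZMod p := (2 : ZMod p)⁻¹ with hi2
      have h2i : φ i2 * 2 = 1 := by
        rw [show (2 : AdjoinRoot f) = φ 2 from (map_ofNat φ 2).symm, ← map_mul, hi2,
          inv_mul_cancel₀ hp2, map_one]
      set x : AdjoinRoot f := φ i2 * (φ (Cd : ZMod p) + s) with hx
      set y : AdjoinRoot f := φ i2 * (φ (Cd : ZMod p) - s) with hy
      have hsum : x + y = φ (Cd : ZMod p) := by
        rw [hx, hy]
        linear_combination (φ (Cd : ZMod p)) * h2i
      have hΔφ : φ Δ' = φ (Cd : ZMod p) ^ 2 + 4 * φ (Dd : ZMod p) := by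
        rw [hΔcast]
        simp [map_add, map_pow, map_mul, map_ofNat]
      have hprod : x * y = -(φ (Dd : ZMod p)) := by
        rw [hx, hy]
        linear_combination (-(φ i2) ^ 2) * hs + (-(φ i2) ^ 2) * hΔφ +
          (-(φ (Dd : ZMod p)) * (φ i2 * 2 + 1)) * h2i
      have hyx : y - x = -s := by
        rw [hx, hy]
        linear_combination (-s) * h2i
      obtain ⟨t, ht⟩ := id hoddp
      have htp : p / 2 = t := by omega
      have heuler : Δ' ^ t = -1 := by
        have h := legendreSym.eq_pow p Δ
        rw [hleg, htp] at h
        rw [← hΔ'def] at h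
        rw [← h]
        push_cast
        ring
      have hsp : s ^ p = -s := by
        calc s ^ p = (s ^ 2) ^ t * s := by
              rw [show s ^ p = s ^ (2 * t + 1) from congrArg (fun n => s ^ n) ht, pow_succ, pow_mul]
        _ = φ (Δ' ^ t) * s := by rw [hs, map_pow]
        _ = -s := by rw [heuler]; simp
      have hfrobC : ∀ c : ZMod p, (φ c) ^ p = φ c := by
        intro c; rw [← map_pow, ZMod.pow_card]
      have hxp : x ^ p = y := by
        rw [hx, mul_pow, hfrobC, add_pow_char, hfrobC, hsp, hy]
        ring
      have hyp : y ^ p = x := by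
        rw [hy, mul_pow, hfrobC, sub_eq_add_neg, add_pow_char, hfrobC,
          hoddp.neg_pow, hsp, hx]
        ring
      set u' : ℕ → AdjoinRoot f := fun k => φ (u k) with hu'def
      have hu' : ∀ k, u' (k + 2) = φ (Cd : ZMod p) * u' (k + 1) + φ (Dd : ZMod p) * u' k := by
        intro k
        show φ (u (k + 2)) = _
        rw [hu k, map_add, map_mul, map_mul]
      have L := lucas_aux (φ (Cd : ZMod p)) (φ (Dd : ZMod p)) x y hsum hprod u' hu'
      have e1 := L (p + 1)
      have hxp1 : x ^ (p + 1) = -(φ (Dd : ZMod p)) := by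
        rw [pow_succ, hxp, ← hprod]; ring
      have hyp1 : y ^ (p + 1) = -(φ (Dd : ZMod p)) := by
        rw [pow_succ, hyp, ← hprod]
      rw [hxp1, hyp1] at e1
      have hes : s * (u' (p + 1) - (-(φ (Dd : ZMod p))) * u' 0) = 0 := by
        linear_combination -e1 + (φ (Dd : ZMod p)) * (u' 0) * hyx - (s * u' (p + 1)) * h2i
      have hsinv : s * (s * φ Δ'⁻¹) = 1 := by
        rw [← mul_assoc, ← sq, hs, ← map_mul, mul_inv_cancel₀ hΔ0, map_one]
      have hz : u' (p + 1) = -(φ (Dd : ZMod p)) * u' 0 := by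
        have h1 : (s * φ Δ'⁻¹) * (s * (u' (p + 1) - (-(φ (Dd : ZMod p))) * u' 0)) = 0 := by
          rw [hes, mul_zero]
        rw [show (s * φ Δ'⁻¹) * (s * (u' (p + 1) - -(φ (Dd : ZMod p)) * u' 0)) =
          (s * (s * φ Δ'⁻¹)) * (u' (p + 1) - -(φ (Dd : ZMod p)) * u' 0) from by ring,
          hsinv, one_mul, sub_eq_zero] at h1
        exact h1
      have hfinal : u (p + 1) = -(Dd : ZMod p) * u 0 := by
        apply hinj
        have : φ (u (p + 1)) = φ (-(Dd : ZMod p) * u 0) := by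
          rw [map_mul, map_neg]
          exact hz
        exact this
      simpa [hu_def] using hfinal
  -- assemble the final statement
  intro r hr
  obtain ⟨m, hm⟩ : ∃ m : ℕ, r = (m : ℤ) - 1 := ⟨(r + 1).toNat, by omega⟩
  have e0 : B r = N m := by rw [hm]; exact hBN m
  have e1 : B ((d : ℤ) + r) = N (d + m) := by
    rw [hm, show (d : ℤ) + ((m : ℤ) - 1) = ((d + m : ℕ) : ℤ) - 1 by push_cast; ring]
    exact hBN (d + m)
  have e2 : B (((p : ℤ) + 1) * d + r) = N ((p + 1) * d + m) := by
    rw [hm, show ((p : ℤ) + 1) * d + ((m : ℤ) - 1) = (((p + 1) * d + m : ℕ) : ℤ) - 1 by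
      push_cast; ring]
    exact hBN ((p + 1) * d + m)
  have e3 : B (((p : ℤ) + 1) * d - 1) = N ((p + 1) * d) := by
    rw [show ((p : ℤ) + 1) * d - 1 = (((p + 1) * d : ℕ) : ℤ) - 1 by push_cast; ring]
    exact hBN ((p + 1) * d)
  have e4 : B ((d : ℤ) - 1) = N d := by
    rw [show (d : ℤ) - 1 = ((d : ℕ) : ℤ) - 1 by push_cast; ring]
    exact hBN d
  have hN0 : N 0 = 0 := rfl
  constructor
  · intro hleg
    constructor
    · rw [← ZMod.intCast_eq_intCast_iff, e2, e0, e1]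
      push_cast
      exact (main m).1 hleg
    · rw [← ZMod.intCast_eq_intCast_iff, e3, e4]
      have h := (main 0).1 hleg
      rw [Nat.add_zero, Nat.add_zero, hN0] at h
      push_cast
      push_cast at h
      rw [h]
      ring
  · intro hleg
    constructor
    · rw [← ZMod.intCast_eq_intCast_iff, e2, e0]
      push_cast
      exact (main m).2 hleg
    · rw [← ZMod.intCast_eq_intCast_iff, e3]
      have h := (main 0).2 hleg
      rw [Nat.add_zero, hN0] at h
      push_cast
      push_cast at h
      rw [h]
      ring
end

section
/- Let p be an odd prime not dividing C_d·D_d, and let r ≥ −1 be an integer. If the Legendre symbol (Δ | p) equals 1, then B_{(p−1)d+r} ≡ B_r (mod p); in particular B_{(p−1)d−1} ≡ 0 (mod p). If the Legendre symbol (Δ | p) equals −1, then B_{pd+r} ≡ C_d·B_r − B_{d+r} (mod p); in particular B_{pd−1} ≡ −B_{d−1} (mod p). -/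
/-- companion sequence with initial values A(-1)=1, A(0)=0 -/
def auxA (a b : ℤ → ℤ) : ℕ → ℤ
  | 0 => 1
  | 1 => 0
  | (n+2) => b (n+1) * auxA a b (n+1) + a (n+1) * auxA a b n

/-- any solution is a combination of B and A -/
lemma aux_sol (a b B A X : ℤ → ℤ)
    (hBrec : ∀ ν : ℤ, 1 ≤ ν → B ν = b ν * B (ν - 1) + a ν * B (ν - 2))
    (hBm1 : B (-1) = 0) (hB0 : B 0 = 1)
    (hArec : ∀ ν : ℤ, 1 ≤ ν → A ν = b ν * A (ν - 1) + a ν * A (ν - 2))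
    (hAm1 : A (-1) = 1) (hA0 : A 0 = 0)
    (hXrec : ∀ ν : ℤ, 1 ≤ ν → X ν = b ν * X (ν - 1) + a ν * X (ν - 2)) :
    ∀ ν : ℤ, -1 ≤ ν → X ν = X 0 * B ν + X (-1) * A ν := by
  have key : ∀ ν : ℤ, -1 ≤ ν →
      ((X ν = X 0 * B ν + X (-1) * A ν) ∧
      (X (ν+1) = X 0 * B (ν+1) + X (-1) * A (ν+1))) := by
    refine Int.le_induction ?_ ?_
    · constructor <;> simp [hBm1, hB0, hAm1, hA0]
    · intro ν hν ih
      refine ⟨ih.2, ?_⟩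
      have h1 : (1:ℤ) ≤ ν + 1 + 1 := by linarith
      rw [hXrec _ h1, hBrec _ h1, hArec _ h1]
      have e1 : ν + 1 + 1 - 1 = ν + 1 := by ring
      have e2 : ν + 1 + 1 - 2 = ν := by ring
      rw [e1, e2, ih.1, ih.2]; ring
  exact fun ν hν => (key ν hν).1

lemma aux_det (a b B A : ℤ → ℤ)
    (hBrec : ∀ ν : ℤ, 1 ≤ ν → B ν = b ν * B (ν - 1) + a ν * B (ν - 2))
    (hBm1 : B (-1) = 0) (hB0 : B 0 = 1)
    (hArec : ∀ ν : ℤ, 1 ≤ ν → A ν = b ν * A (ν - 1) + a ν * A (ν - 2))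
    (hAm1 : A (-1) = 1) (hA0 : A 0 = 0) :
    ∀ n : ℕ, B ((n:ℤ) - 1) * A (n:ℤ) - B (n:ℤ) * A ((n:ℤ) - 1)
      = (-1)^(n+1) * ∏ i ∈ Finset.range n, a ((i:ℤ) + 1) := by
  intro n
  induction n with
  | zero => simp [hBm1, hB0, hAm1, hA0]
  | succ n ih =>
    have h1 : (1:ℤ) ≤ (n:ℤ) + 1 := by omega
    push_cast
    rw [Finset.prod_range_succ, hBrec _ h1, hArec _ h1]
    have e1 : (n:ℤ) + 1 - 1 = n := by ring
    have e2 : (n:ℤ) + 1 - 2 = n - 1 := by ring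
    rw [e1, e2]
    have : B ((n:ℤ) - 1) * A (n:ℤ) - B (n:ℤ) * A ((n:ℤ) - 1)
      = (-1)^(n+1) * ∏ i ∈ Finset.range n, a ((i:ℤ) + 1) := ih
    push_cast at this ⊢
    linear_combination (-(a ((n:ℤ)+1))) * this

lemma key_rec (d : ℕ) (hd : 1 ≤ d) (a b : ℤ → ℤ)
    (ha : ∀ ν : ℤ, 1 ≤ ν → 0 < a ν) (hb : ∀ ν : ℤ, 1 ≤ ν → 0 < b ν)
    (hpa : ∀ ν : ℤ, 1 ≤ ν → a (ν + d) = a ν) (hpb : ∀ ν : ℤ, 1 ≤ ν → b (ν + d) = b ν)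
    (B : ℤ → ℤ) (hBm1 : B (-1) = 0) (hB0 : B 0 = 1)
    (hBrec : ∀ ν : ℤ, 1 ≤ ν → B ν = b ν * B (ν - 1) + a ν * B (ν - 2))
    (Cd Dd : ℤ)
    (hC : B ((d : ℤ) - 1) * Cd = B (2 * (d : ℤ) - 1))
    (hD : Dd = (-1 : ℤ) ^ (d - 1) * ∏ i ∈ Finset.range d, a ((i : ℤ) + 1)) :
    ∀ ν : ℤ, -1 ≤ ν → B (ν + 2*d) = Cd * B (ν + d) + Dd * B ν := by
  set A : ℤ → ℤ := fun ν => auxA a b (ν + 1).toNat with hA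
  have hAm1 : A (-1) = 1 := by show auxA a b ((-1:ℤ)+1).toNat = 1; norm_num [auxA]
  have hA0 : A 0 = 0 := by show auxA a b ((0:ℤ)+1).toNat = 0; norm_num [auxA]
  have hArec : ∀ ν : ℤ, 1 ≤ ν → A ν = b ν * A (ν - 1) + a ν * A (ν - 2) := by
    intro ν hν
    obtain ⟨m, rfl⟩ : ∃ m : ℕ, ν = (m : ℤ) + 1 := ⟨(ν - 1).toNat, by omega⟩
    have e1 : ((m:ℤ) + 1 + 1).toNat = m + 2 := by omega
    have e2 : ((m:ℤ) + 1 - 1 + 1).toNat = m + 1 := by omega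
    have e3 : ((m:ℤ) + 1 - 2 + 1).toNat = m := by omega
    show auxA a b ((m:ℤ) + 1 + 1).toNat = _ * auxA a b ((m:ℤ)+1-1+1).toNat
      + _ * auxA a b ((m:ℤ)+1-2+1).toNat
    rw [e1, e2, e3]
    show b (↑(m+1)) * auxA a b (m+1) + a (↑(m+1)) * auxA a b m = _
    push_cast
    ring
  have hBpos : ∀ ν : ℤ, 0 ≤ ν → 0 ≤ B (ν - 1) ∧ 0 < B ν := by
    refine Int.le_induction ?_ ?_
    · norm_num [hBm1, hB0]
    · rintro ν hν ⟨h1, h2⟩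
      have h3 : (1:ℤ) ≤ ν + 1 := by linarith
      constructor
      · simpa using h2.le
      · rw [hBrec _ h3]
        have e1 : ν + 1 - 1 = ν := by ring
        have e2 : ν + 1 - 2 = ν - 1 := by ring
        rw [e1, e2]
        have := ha _ h3; have := hb _ h3
        nlinarith
  have hBd : ∀ ν : ℤ, -1 ≤ ν → B (ν + d) = B (d:ℤ) * B ν + B ((d:ℤ)-1) * A ν := by
    have hX : ∀ ν : ℤ, 1 ≤ ν → B (ν + d) = b ν * B (ν - 1 + d) + a ν * B (ν - 2 + d) := by
      intro ν hν
      have h1 : (1:ℤ) ≤ ν + d := by omega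
      rw [hBrec _ h1, hpa _ hν, hpb _ hν]
      have e1 : ν + d - 1 = ν - 1 + d := by ring
      have e2 : ν + d - 2 = ν - 2 + d := by ring
      rw [e1, e2]
    have := aux_sol a b B A (fun ν => B (ν + d)) hBrec hBm1 hB0 hArec hAm1 hA0 hX
    intro ν hν
    have h := this ν hν
    simp only [zero_add] at h
    have e : (-1 : ℤ) + d = (d:ℤ) - 1 := by ring
    rw [e] at h
    exact h
  have hAd : ∀ ν : ℤ, -1 ≤ ν → A (ν + d) = A (d:ℤ) * B ν + A ((d:ℤ)-1) * A ν := by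
    have hX : ∀ ν : ℤ, 1 ≤ ν → A (ν + d) = b ν * A (ν - 1 + d) + a ν * A (ν - 2 + d) := by
      intro ν hν
      have h1 : (1:ℤ) ≤ ν + d := by omega
      rw [hArec _ h1, hpa _ hν, hpb _ hν]
      have e1 : ν + d - 1 = ν - 1 + d := by ring
      have e2 : ν + d - 2 = ν - 2 + d := by ring
      rw [e1, e2]
    have := aux_sol a b B A (fun ν => A (ν + d)) hBrec hBm1 hB0 hArec hAm1 hA0 hX
    intro ν hν
    have h := this ν hν
    simp only [zero_add] at h
    have e : (-1 : ℤ) + d = (d:ℤ) - 1 := by ring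
    rw [e] at h
    exact h
  have hdet : B ((d:ℤ) - 1) * A (d:ℤ) - B (d:ℤ) * A ((d:ℤ) - 1) = Dd := by
    have h := aux_det a b B A hBrec hBm1 hB0 hArec hAm1 hA0 d
    rw [h, hD]
    obtain ⟨e, rfl⟩ : ∃ e : ℕ, d = e + 1 := ⟨d - 1, by omega⟩
    congr 1
    simp [pow_succ]
  have hrec : ∀ ν : ℤ, -1 ≤ ν →
      B (ν + 2*d) = (B (d:ℤ) + A ((d:ℤ)-1)) * B (ν + d) + Dd * B ν := by
    intro ν hν
    have h1 := hBd (ν + d) (by omega)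
    have h2 := hAd ν hν
    have h3 := hBd ν hν
    have e : ν + 2*d = ν + d + d := by ring
    rw [e]
    linear_combination h1 + B ((d:ℤ)-1) * h2 - A ((d:ℤ)-1) * h3 + B ν * hdet
  have hT : Cd = B (d:ℤ) + A ((d:ℤ)-1) := by
    have h := hrec (-1) (by norm_num)
    have e1 : (-1:ℤ) + 2*d = 2*(d:ℤ) - 1 := by ring
    have e2 : (-1:ℤ) + d = (d:ℤ) - 1 := by ring
    rw [e1, e2, hBm1] at h
    have hne : B ((d:ℤ) - 1) ≠ 0 := by
      have := (hBpos ((d:ℤ) - 1) (by omega)).2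
      omega
    have : B ((d:ℤ)-1) * Cd = B ((d:ℤ)-1) * (B (d:ℤ) + A ((d:ℤ)-1)) := by
      rw [hC, h]; ring
    exact mul_left_cancel₀ hne this
  intro ν hν
  rw [hT]
  exact hrec ν hν

lemma ring_lemma (p : ℕ) [Fact p.Prime] (hodd : p ≠ 2)
    (F : Type*) [CommRing F] [CharP F p]
    (ι : ZMod p →+* F) (hinj : Function.Injective ι)
    (C D Δ : ℤ) (hΔ : Δ = C ^ 2 + 4 * D) (hDp : (D : ZMod p) ≠ 0)
    (α : F) (hα : α ^ 2 = ι ((C : ZMod p)) * α + ι ((D : ZMod p)))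
    (u : ℕ → ZMod p)
    (hu : ∀ k : ℕ, u (k + 2) = (C : ZMod p) * u (k + 1) + (D : ZMod p) * u k) :
    (legendreSym p Δ = 1 → u (p - 1) = u 0) ∧
    (legendreSym p Δ = -1 → u p = (C : ZMod p) * u 0 - u 1) := by
  haveI hexp : ExpChar F p := .prime Fact.out
  set c : F := ι ((C : ZMod p)) with hc
  set dd : F := ι ((D : ZMod p)) with hdd
  set β : F := c - α with hβ'
  set t : F := α - β with ht'
  have hcp : c ^ p = c := by rw [hc, ← map_pow, ZMod.pow_card]
  have hβ2 : β ^ 2 = c * β + dd := by rw [hβ']; linear_combination hα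
  have hαβ : α * β = -dd := by rw [hβ']; linear_combination -hα
  have hΔK : ((Δ : ℤ) : ZMod p) = (C : ZMod p) ^ 2 + 4 * (D : ZMod p) := by
    rw [hΔ]; push_cast; ring
  have ht2 : t * t = ι ((Δ : ZMod p)) := by
    rw [hΔK, map_add, map_pow, map_mul]
    have h4 : ι ((4 : ZMod p)) = 4 := map_ofNat ι 4
    rw [h4, ← hc, ← hdd, ht', hβ']
    linear_combination (4 : F) * hα
  obtain ⟨k, hk⟩ := (Fact.out : p.Prime).odd_of_ne_two hodd
  have hp2 : p / 2 = k := by omega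
  have htp : t ^ p = t * ι ((legendreSym p Δ : ZMod p)) := by
    have e1 : ((legendreSym p Δ : ℤ) : ZMod p) = ((Δ : ZMod p)) ^ (p / 2) := by
      have := legendreSym.eq_pow p Δ
      simpa using this
    rw [e1, hp2, map_pow, ← ht2]
    calc t ^ p = t ^ (2 * k + 1) := by rw [← hk]
    _ = (t ^ 2) ^ k * t := by rw [pow_succ, pow_mul]
    _ = t * (t * t) ^ k := by rw [sq]; exact mul_comm _ _
  have htfrob : t ^ p = 2 * α ^ p - c := by
    rw [ht', hβ', sub_pow_char, sub_pow_char, hcp]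
    ring
  have h2K : (2 : ZMod p) ≠ 0 := by
    have : ((2 : ℕ) : ZMod p) ≠ 0 := by
      rw [Ne, ZMod.natCast_eq_zero_iff]
      intro h
      exact hodd ((Nat.prime_dvd_prime_iff_eq Fact.out Nat.prime_two).mp h)
    simpa using this
  have h2F : IsUnit (2 : F) := by
    have h := h2K.isUnit.map ι
    rwa [map_ofNat] at h
  set v : ℕ → F := fun n => ι (u n) with hv
  have hvrec : ∀ n : ℕ, v (n + 2) = c * v (n + 1) + dd * v n := by
    intro n
    simp only [hv]
    rw [hu n, map_add, map_mul, map_mul, hc, hdd]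
  have closed : ∀ n : ℕ, t * v n = (v 1 - β * v 0) * α ^ n + (α * v 0 - v 1) * β ^ n := by
    have key : ∀ n : ℕ,
        (t * v n = (v 1 - β * v 0) * α ^ n + (α * v 0 - v 1) * β ^ n) ∧
        (t * v (n + 1) = (v 1 - β * v 0) * α ^ (n + 1) + (α * v 0 - v 1) * β ^ (n + 1)) := by
      intro n
      induction n with
      | zero => constructor <;> · simp only [pow_zero, pow_one, ht']; ring
      | succ n ih =>
        refine ⟨ih.2, ?_⟩
        rw [hvrec n]
        have e1 : (α : F) ^ (n + 1 + 1) = α ^ n * α ^ 2 := by ring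
        have e2 : (β : F) ^ (n + 1 + 1) = β ^ n * β ^ 2 := by ring
        rw [e1, e2, hα, hβ2]
        have h1 := ih.1
        have h2 := ih.2
        have e3 : (α : F) ^ (n + 1) = α ^ n * α := by ring
        have e4 : (β : F) ^ (n + 1) = β ^ n * β := by ring
        rw [e3, e4] at h2
        linear_combination c * h2 + dd * h1
    exact fun n => (key n).1
  constructor
  · intro hleg
    have hΔ0 : ((Δ : ℤ) : ZMod p) ≠ 0 := by
      intro h
      rw [(legendreSym.eq_zero_iff p Δ).mpr h] at hleg
      norm_num at hleg
    have htu : IsUnit t := isUnit_of_mul_isUnit_left (ht2 ▸ (hΔ0.isUnit.map ι))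
    have htt : t ^ p = t := by
      rw [htp, hleg]; simp
    have hαp : α ^ p = α := by
      have h : (2 : F) * (α ^ p - α) = 0 := by
        have h0 := htfrob.symm.trans htt
        linear_combination h0
      have h1 := h2F.mul_right_eq_zero.mp h
      linear_combination h1
    have hβp : β ^ p = β := by
      rw [hβ', sub_pow_char, hcp, hαp]
    have hαu : IsUnit α := by
      have h : IsUnit (α * β) := by
        rw [hαβ]
        exact (hDp.isUnit.map ι).neg
      exact isUnit_of_mul_isUnit_left h
    have hβu : IsUnit β := by
      have h : IsUnit (β * α) := by
        rw [mul_comm, hαβ]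
        exact (hDp.isUnit.map ι).neg
      exact isUnit_of_mul_isUnit_left h
    have hαp1 : α ^ (p - 1) = 1 := by
      have hp1 : p - 1 + 1 = p := by omega
      have h : α ^ (p - 1) * α = 1 * α := by
        rw [one_mul, ← pow_succ, hp1, hαp]
      exact hαu.mul_right_cancel h
    have hβp1 : β ^ (p - 1) = 1 := by
      have hp1 : p - 1 + 1 = p := by omega
      have h : β ^ (p - 1) * β = 1 * β := by
        rw [one_mul, ← pow_succ, hp1, hβp]
      exact hβu.mul_right_cancel h
    have h := closed (p - 1)
    rw [hαp1, hβp1] at h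
    have h' : t * v (p - 1) = t * v 0 := by
      rw [h, ht']; ring
    have hvv := htu.mul_left_cancel h'
    exact hinj hvv
  · intro hleg
    have hΔ0 : ((Δ : ℤ) : ZMod p) ≠ 0 := by
      intro h
      rw [(legendreSym.eq_zero_iff p Δ).mpr h] at hleg
      norm_num at hleg
    have htu : IsUnit t := isUnit_of_mul_isUnit_left (ht2 ▸ (hΔ0.isUnit.map ι))
    have htt : t ^ p = -t := by
      rw [htp, hleg]; simp
    have hαp : α ^ p = β := by
      have h : (2 : F) * (α ^ p - β) = 0 := by
        have h0 := htfrob.symm.trans htt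
        rw [ht', hβ'] at h0
        rw [hβ']
        linear_combination h0
      have h1 := h2F.mul_right_eq_zero.mp h
      linear_combination h1
    have hβp : β ^ p = α := by
      rw [hβ', sub_pow_char, hcp, hαp, hβ']
      ring
    have h := closed p
    rw [hαp, hβp] at h
    have h' : t * v p = t * (c * v 0 - v 1) := by
      rw [h, ht', hβ']
      ring
    have hvv := htu.mul_left_cancel h'
    have hfin : v p = ι ((C : ZMod p) * u 0 - u 1) := by
      rw [hvv, map_sub, map_mul, hc]
    exact hinj hfin

open Polynomial in
lemma lucas_cong (p : ℕ) [Fact p.Prime] (hodd : p ≠ 2) (C D Δ : ℤ)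
    (hΔ : Δ = C ^ 2 + 4 * D) (hDp : (D : ZMod p) ≠ 0)
    (u : ℕ → ZMod p)
    (hu : ∀ k : ℕ, u (k + 2) = (C : ZMod p) * u (k + 1) + (D : ZMod p) * u k) :
    (legendreSym p Δ = 1 → u (p - 1) = u 0) ∧
    (legendreSym p Δ = -1 → u p = (C : ZMod p) * u 0 - u 1) := by
  have hdeg : (X ^ 2 - Polynomial.C ((C : ZMod p)) * X - Polynomial.C ((D : ZMod p))).degree = 2 := by
    have h1 : (Polynomial.C ((C : ZMod p)) * X + Polynomial.C ((D : ZMod p))).degree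
        < (X ^ 2 : (ZMod p)[X]).degree := by
      refine lt_of_le_of_lt (Polynomial.degree_linear_le) ?_
      rw [Polynomial.degree_X_pow]
      norm_num
    have e : (X ^ 2 - Polynomial.C ((C : ZMod p)) * X - Polynomial.C ((D : ZMod p)) : (ZMod p)[X])
        = X ^ 2 - (Polynomial.C ((C : ZMod p)) * X + Polynomial.C ((D : ZMod p))) := by ring
    rw [e, Polynomial.degree_sub_eq_left_of_degree_lt h1, Polynomial.degree_X_pow]
    rfl
  have hdeg0 : (X ^ 2 - Polynomial.C ((C : ZMod p)) * X - Polynomial.C ((D : ZMod p))).degree ≠ 0 := by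
    rw [hdeg]; decide
  have hinj := AdjoinRoot.of.injective_of_degree_ne_zero hdeg0
  haveI hchar : CharP (AdjoinRoot (X ^ 2 - Polynomial.C ((C : ZMod p)) * X - Polynomial.C ((D : ZMod p)))) p :=
    charP_of_injective_ringHom hinj p
  have h := AdjoinRoot.eval₂_root (X ^ 2 - Polynomial.C ((C : ZMod p)) * X - Polynomial.C ((D : ZMod p)))
  simp only [Polynomial.eval₂_sub, Polynomial.eval₂_mul, Polynomial.eval₂_pow,
    Polynomial.eval₂_X, Polynomial.eval₂_C] at h
  refine ring_lemma p hodd _ _ hinj C D Δ hΔ hDp (AdjoinRoot.root _) ?_ u hu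
  linear_combination h

/-- Congruences for `B_{(p−1)d+r}` and `B_{pd+r}` modulo an odd prime `p ∤ C_d·D_d`,
according to whether `Δ` is a quadratic residue or non-residue modulo `p`. -/
theorem divisibility_p
    (d : ℕ) (hd : 1 ≤ d) (a b : ℤ → ℤ)
    (ha : ∀ ν : ℤ, 1 ≤ ν → 0 < a ν) (hb : ∀ ν : ℤ, 1 ≤ ν → 0 < b ν)
    (hpa : ∀ ν : ℤ, 1 ≤ ν → a (ν + d) = a ν) (hpb : ∀ ν : ℤ, 1 ≤ ν → b (ν + d) = b ν)
    (B : ℤ → ℤ) (hBm1 : B (-1) = 0) (hB0 : B 0 = 1)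
    (hBrec : ∀ ν : ℤ, 1 ≤ ν → B ν = b ν * B (ν - 1) + a ν * B (ν - 2))
    (Cd Dd Δ : ℤ)
    (hC : B ((d : ℤ) - 1) * Cd = B (2 * (d : ℤ) - 1))
    (hD : Dd = (-1 : ℤ) ^ (d - 1) * ∏ i ∈ Finset.range d, a ((i : ℤ) + 1))
    (hΔ : Δ = Cd ^ 2 + 4 * Dd)
    (p : ℕ) [Fact p.Prime] (hodd : p ≠ 2) (hpCD : ¬ (p : ℤ) ∣ Cd * Dd) :
    ∀ r : ℤ, -1 ≤ r →
      (legendreSym p Δ = 1 →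
        B (((p : ℤ) - 1) * d + r) ≡ B r [ZMOD p] ∧
        B (((p : ℤ) - 1) * d - 1) ≡ 0 [ZMOD p]) ∧
      (legendreSym p Δ = -1 →
        B ((p : ℤ) * d + r) ≡ Cd * B r - B ((d : ℤ) + r) [ZMOD p] ∧
        B ((p : ℤ) * d - 1) ≡ -B ((d : ℤ) - 1) [ZMOD p]) := by
  have hpp : p.Prime := Fact.out
  have hpD : ¬ (p : ℤ) ∣ Dd := fun h => hpCD (Dvd.dvd.mul_left h Cd)
  have hDp : ((Dd : ℤ) : ZMod p) ≠ 0 := by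
    rw [Ne, ZMod.intCast_zmod_eq_zero_iff_dvd]
    exact hpD
  have hrec := key_rec d hd a b ha hb hpa hpb B hBm1 hB0 hBrec Cd Dd hC hD
  have main : ∀ r' : ℤ, -1 ≤ r' →
      (legendreSym p Δ = 1 → B (((p : ℤ) - 1) * d + r') ≡ B r' [ZMOD p]) ∧
      (legendreSym p Δ = -1 → B ((p : ℤ) * d + r') ≡ Cd * B r' - B ((d : ℤ) + r') [ZMOD p]) := by
    intro r' hr'
    set u : ℕ → ZMod p := fun k => ((B ((k : ℤ) * d + r') : ℤ) : ZMod p) with hu'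
    have hu : ∀ k : ℕ, u (k + 2) = (Cd : ZMod p) * u (k + 1) + (Dd : ZMod p) * u k := by
      intro k
      have hge : -1 ≤ (k : ℤ) * d + r' := by
        have h0 : (0 : ℤ) ≤ (k : ℤ) * d := by positivity
        omega
      have h := hrec ((k : ℤ) * d + r') hge
      simp only [hu']
      have e2 : ((k : ℤ) + 2) * d + r' = (k : ℤ) * d + r' + 2 * d := by ring
      have e1 : ((k : ℤ) + 1) * d + r' = (k : ℤ) * d + r' + d := by ring
      push_cast
      rw [e2, e1, h]
      push_cast
      ring
    have hl := lucas_cong p hodd Cd Dd Δ hΔ hDp u hu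
    constructor
    · intro hleg
      have h := hl.1 hleg
      simp only [hu'] at h
      have e : ((p - 1 : ℕ) : ℤ) = (p : ℤ) - 1 := by
        have := hpp.pos; omega
      rw [e] at h
      have e0 : ((0 : ℕ) : ℤ) * d + r' = r' := by norm_num
      rw [e0] at h
      exact (ZMod.intCast_eq_intCast_iff _ _ _).mp h
    · intro hleg
      have h := hl.2 hleg
      simp only [hu'] at h
      have e0 : ((0 : ℕ) : ℤ) * d + r' = r' := by norm_num
      have e1 : ((1 : ℕ) : ℤ) * d + r' = (d : ℤ) + r' := by push_cast; ring
      rw [e0, e1] at h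
      have h' : ((B ((p : ℤ) * d + r') : ℤ) : ZMod p) = ((Cd * B r' - B ((d : ℤ) + r') : ℤ) : ZMod p) := by
        rw [h]; push_cast; ring
      exact (ZMod.intCast_eq_intCast_iff _ _ _).mp h'
  intro r hr
  constructor
  · intro hleg
    refine ⟨(main r hr).1 hleg, ?_⟩
    have h := (main (-1) (by norm_num)).1 hleg
    have e : ((p : ℤ) - 1) * d + (-1) = ((p : ℤ) - 1) * d - 1 := by ring
    rw [e, hBm1] at h
    exact h
  · intro hleg
    refine ⟨(main r hr).2 hleg, ?_⟩
    have h := (main (-1) (by norm_num)).2 hleg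
    have e : (p : ℤ) * d + (-1) = (p : ℤ) * d - 1 := by ring
    have e2 : (d : ℤ) + (-1) = (d : ℤ) - 1 := by ring
    rw [e, e2, hBm1] at h
    have e3 : Cd * 0 - B ((d : ℤ) - 1) = -B ((d : ℤ) - 1) := by ring
    rw [e3] at h
    exact h
end
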